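/- For every real x, the integral over t ∈ ℝ of u_1(x,t) = 4(1 - x^2 + t^2)/(1 + x^2 + t^2)^2 equals 4π/(x^2 + 1)^{3/2}. -/

import Mathlib

open MeasureTheory Real Filter Topology

theorem stmt6 : ∀ x : ℝ,
    ∫ t : ℝ, 4 * (1 - x^2 + t^2) / (1 + x^2 + t^2)^2
      = 4 * π / (x^2 + 1) ^ ((3:ℝ)/2) := by
  intro x
  set a : ℝ := Real.sqrt (1 + x^2) with ha
  have ha0 : 0 < a := Real.sqrt_pos.2 (by positivity)
  have ha2 : a ^ 2 = 1 + x ^ 2 := Real.sq_sqrt (by positivity)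
  set F : ℝ → ℝ := fun t => (4 / a ^ 3) * arctan (t / a)
      - (4 * x ^ 2 / a ^ 2) * (t / (a ^ 2 + t ^ 2)) with hF
  have hden : ∀ t : ℝ, (0:ℝ) < a ^ 2 + t ^ 2 := fun t => by positivity
  have hderiv : ∀ t : ℝ, HasDerivAt F (4 * (1 - x^2 + t^2) / (1 + x^2 + t^2)^2) t := by
    intro t
    have h1 : HasDerivAt (fun t : ℝ => arctan (t / a)) (1 / (1 + (t/a)^2) * (1/a)) t := by
      simpa [Function.comp_def] using
        (Real.hasDerivAt_arctan (t / a)).comp t ((hasDerivAt_id t).div_const a)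
    have h2 : HasDerivAt (fun t : ℝ => t / (a ^ 2 + t ^ 2))
        ((1 * (a^2 + t^2) - t * (2 * t)) / (a^2 + t^2)^2) t := by
      have hd : HasDerivAt (fun t : ℝ => a ^ 2 + t ^ 2) (2 * t) t := by
        simpa using ((hasDerivAt_pow 2 t).const_add (a ^ 2))
      exact (hasDerivAt_id t).div hd (hden t).ne'
    have := (h1.const_mul (4 / a ^ 3)).sub (h2.const_mul (4 * x ^ 2 / a ^ 2))
    refine HasDerivAt.congr_deriv this ?_
    symm
    have hx2 : x ^ 2 = a ^ 2 - 1 := by linarith [ha2]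
    have h3 : (1 : ℝ) + (t/a)^2 = (a^2 + t^2)/a^2 := by field_simp
    rw [← ha2, hx2, h3]
    field_simp
    ring
  have hint : Integrable (fun t : ℝ => 4 * (1 - x^2 + t^2) / (1 + x^2 + t^2)^2) := by
    have hg : Integrable (fun t : ℝ => (4 + 8 * x ^ 2) * (1 + t ^ 2)⁻¹) :=
      integrable_inv_one_add_sq.const_mul _
    refine hg.mono' ?_ ?_
    · exact (Continuous.div (by continuity) (by continuity)
        (fun t => by positivity)).aestronglyMeasurable
    · filter_upwards with t
      have h1 : (0:ℝ) < 1 + t ^ 2 := by positivity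
      have h2 : (0:ℝ) < 1 + x ^ 2 + t ^ 2 := by positivity
      rw [Real.norm_eq_abs, abs_div, abs_of_pos (by positivity : (0:ℝ) < (1+x^2+t^2)^2),
        ← div_eq_mul_inv, div_le_div_iff₀ (by positivity) h1]
      rcases abs_cases (4 * (1 - x^2 + t^2)) with ⟨h, _⟩ | ⟨h, _⟩ <;> rw [h] <;> nlinarith [sq_nonneg (x*t), sq_nonneg x, sq_nonneg t, sq_nonneg (x^2 - t^2), sq_nonneg (x^2+t^2)]
  have htop : Tendsto F atTop (𝓝 ((4 / a ^ 3) * (π / 2))) := by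
    have l1 : Tendsto (fun t : ℝ => t / a) atTop atTop :=
      Tendsto.atTop_div_const ha0 tendsto_id
    have l2 : Tendsto (fun t : ℝ => arctan (t / a)) atTop (𝓝 (π / 2)) :=
      (tendsto_nhds_of_tendsto_nhdsWithin Real.tendsto_arctan_atTop).comp l1
    have l3 : Tendsto (fun t : ℝ => t / (a ^ 2 + t ^ 2)) atTop (𝓝 0) := by
      have hb : Tendsto (fun t : ℝ => a ^ 2 / t + t) atTop atTop :=
        Filter.tendsto_atTop_add_left_of_le' _ 0 ?_ tendsto_id
      · refine (tendsto_inv_atTop_zero.comp hb).congr' ?_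
        filter_upwards [eventually_gt_atTop (0:ℝ)] with t ht
        have : a ^ 2 / t + t ≠ 0 := by positivity
        simp only [Function.comp_apply]
        field_simp
      · filter_upwards [eventually_gt_atTop (0:ℝ)] with t ht
        positivity
    have := (l2.const_mul (4 / a ^ 3)).sub ((l3.const_mul (4 * x ^ 2 / a ^ 2)))
    simpa using this
  have hbot : Tendsto F atBot (𝓝 (-((4 / a ^ 3) * (π / 2)))) := by
    have h2 : Tendsto (fun t : ℝ => F (-t)) atBot (𝓝 ((4 / a ^ 3) * (π / 2))) :=
      htop.comp tendsto_neg_atBot_atTop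
    have h3 : (fun t : ℝ => F (-t)) = fun t => -F t := by
      funext t
      simp only [hF, neg_div, Real.arctan_neg]
      ring
    rw [h3] at h2
    simpa using h2.neg
  have := integral_of_hasDerivAt_of_tendsto hderiv hint hbot htop
  rw [this]
  have : (x ^ 2 + 1) ^ ((3:ℝ)/2) = a ^ 3 := by
    rw [ha, Real.sqrt_eq_rpow, ← Real.rpow_natCast ((1+x^2) ^ ((1:ℝ)/2)) 3,
      ← Real.rpow_mul (by positivity)]
    norm_num [add_comm]
  rw [this]
  field_simp
  ring
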